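/- Let K_1, …, K_d be linearly independent real symmetric m×m matrices such that some linear combination is positive definite, and let L be their span. Then the map K ↦ (trace(K^{-1}·K_1),…,trace(K^{-1}·K_d)) is a bijection from {K ∈ L : K positive definite} onto the cone C_L = {(trace(S·K_1),…,trace(S·K_d)) : S positive definite}. Equivalently, for every t ∈ C_L there is a unique positive definite K ∈ L with trace(K^{-1}·K_j) = t_j for all j, and its inverse K^{-1} is the maximum likelihood estimate of the covariance matrix for the sufficient statistics t. -/

import Mathlib

open Matrix

variable {m : ℕ}



private lemma isHermitian_of_isSymm {A : Matrix (Fin m) (Fin m) ℝ} (h : A.IsSymm) :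
    A.IsHermitian := by
  rw [Matrix.IsHermitian, conjTranspose_eq_transpose_of_trivial]; exact h

private lemma herm_entry {A : Matrix (Fin m) (Fin m) ℝ} (h : A.IsHermitian) (i j : Fin m) :
    A j i = A i j := by
  conv_lhs => rw [← h]
  simp [conjTranspose_apply]

/-- trace of product with symmetric left factor as Frobenius pairing. -/
private lemma trace_mul_eq_sum {A B : Matrix (Fin m) (Fin m) ℝ} (hA : A.IsHermitian) :
    (A * B).trace = ∑ p : Fin m × Fin m, A p.1 p.2 * B p.1 p.2 := by
  rw [Fintype.sum_prod_type]
  rw [Matrix.trace, ]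
  simp only [Matrix.diag_apply, Matrix.mul_apply]
  rw [Finset.sum_comm]
  refine Finset.sum_congr rfl fun j _ => Finset.sum_congr rfl fun i _ => ?_
  rw [herm_entry hA j i, mul_comm]

/-- diagonal entries of PSD matrices are nonneg -/
private lemma psd_diag_nonneg {A : Matrix (Fin m) (Fin m) ℝ} (h : A.PosSemidef) (i : Fin m) :
    0 ≤ A i i := by
  have := h.dotProduct_mulVec_nonneg (Pi.single i 1)
  simpa [dotProduct, Matrix.mulVec, Pi.single_apply, Finset.sum_ite_eq, Finset.mul_sum] using this

private lemma psd_trace_nonneg {A : Matrix (Fin m) (Fin m) ℝ} (h : A.PosSemidef) :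
    0 ≤ A.trace := Finset.sum_nonneg fun i _ => psd_diag_nonneg h i

/-- trace (Cᴴ * Q * C) diagonal entries -/
private lemma conj_diag (Q C : Matrix (Fin m) (Fin m) ℝ) (i : Fin m) :
    (Cᴴ * Q * C) i i = star (fun j => C j i) ⬝ᵥ Q *ᵥ (fun j => C j i) := by
  simp only [Matrix.mul_apply, dotProduct, Matrix.mulVec, conjTranspose_apply,
    star_trivial, Pi.star_apply, Finset.sum_mul, Finset.mul_sum]
  rw [Finset.sum_comm]
  refine Finset.sum_congr rfl fun k _ => Finset.sum_congr rfl fun j _ => by ring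

private lemma trace_conj_pos {Q C : Matrix (Fin m) (Fin m) ℝ} (hQ : Q.PosDef) (hC : C ≠ 0) :
    0 < (Cᴴ * Q * C).trace := by
  obtain ⟨j, i, hji⟩ : ∃ j i, C j i ≠ 0 := by
    by_contra h
    push_neg at h
    exact hC (Matrix.ext fun j i => h j i)
  have hcol : (fun k => C k i) ≠ 0 := fun h0 => hji (congrFun h0 j)
  refine Finset.sum_pos' (fun k _ => ?_) ⟨i, Finset.mem_univ i, ?_⟩
  · rw [Matrix.diag_apply, conj_diag]
    exact hQ.posSemidef.dotProduct_mulVec_nonneg _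
  · rw [Matrix.diag_apply, conj_diag]
    exact hQ.dotProduct_mulVec_pos hcol
open scoped MatrixOrder in
/-- If P, Q posdef and A ≠ 0 hermitian, then trace(P·A·Q·A) > 0. -/
private lemma trace_PAQA_pos {P Q A : Matrix (Fin m) (Fin m) ℝ} (hP : P.PosDef)
    (hQ : Q.PosDef) (hA : A.IsHermitian) (hA0 : A ≠ 0) :
    0 < (P * A * Q * A).trace := by
  set R := CFC.sqrt P with hR
  have hRR : R * R = P := CFC.sqrt_mul_sqrt_self P hP.posSemidef.nonneg
  have hRherm : R.IsHermitian := (CFC.sqrt_nonneg P).posSemidef.isHermitian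
  have hdetR : IsUnit R.det := by
    have : R.det * R.det = P.det := by rw [← det_mul, hRR]
    have hP0 := hP.det_pos
    refine isUnit_iff_ne_zero.2 fun h => ?_
    rw [h, mul_zero] at this
    exact absurd this.symm (ne_of_gt hP0)
  set C := A * R with hC
  have hC0 : C ≠ 0 := by
    intro h
    apply hA0
    have : A * (R * R⁻¹) = 0 := by rw [← mul_assoc, ← hC, h, zero_mul]
    rwa [Matrix.mul_nonsing_inv _ hdetR, mul_one] at this
  have hCH : Cᴴ = R * A := by
    rw [hC, conjTranspose_mul, hRherm.eq, hA.eq]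
  have htr : (P * A * Q * A).trace = (Cᴴ * Q * C).trace := by
    rw [hCH, hC, ← hRR]
    calc (R * R * A * Q * A).trace = (R * (R * A * Q * A)).trace := by
          simp only [Matrix.mul_assoc]
      _ = ((R * A * Q * A) * R).trace := Matrix.trace_mul_comm _ _
      _ = (R * A * Q * (A * R)).trace := by simp only [Matrix.mul_assoc]
  rw [htr]
  exact trace_conj_pos hQ hC0

open scoped MatrixOrder in
private lemma psd_trace_mul_nonneg {A B : Matrix (Fin m) (Fin m) ℝ} (hA : A.PosSemidef)
    (hB : B.PosSemidef) : 0 ≤ (A * B).trace := by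
  obtain ⟨C, rfl⟩ := CStarAlgebra.nonneg_iff_eq_star_mul_self.mp hA.nonneg
  rw [Matrix.trace_mul_cycle, Matrix.trace_mul_cycle]
  exact psd_trace_nonneg (hB.mul_mul_conjTranspose_same C)

private lemma conj_unitary_smul_one {A : Matrix (Fin m) (Fin m) ℝ} (hA : A.IsHermitian) (c : ℝ) :
    (hA.eigenvectorUnitary : Matrix (Fin m) (Fin m) ℝ) * (c • 1) *
      star (hA.eigenvectorUnitary : Matrix (Fin m) (Fin m) ℝ) = c • 1 := by
  rw [Matrix.mul_smul, mul_one, Matrix.smul_mul,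
    Matrix.mem_unitaryGroup_iff.mp (Matrix.IsHermitian.eigenvectorUnitary hA).2]

private lemma spectral_decomp_real {A : Matrix (Fin m) (Fin m) ℝ} (hA : A.IsHermitian) :
    A = (hA.eigenvectorUnitary : Matrix (Fin m) (Fin m) ℝ) * diagonal hA.eigenvalues *
      star (hA.eigenvectorUnitary : Matrix (Fin m) (Fin m) ℝ) := by
  have := hA.spectral_theorem
  simpa using this

private lemma sub_smul_one_psd {A : Matrix (Fin m) (Fin m) ℝ} (hA : A.IsHermitian) {c : ℝ}
    (h : ∀ i, c ≤ hA.eigenvalues i) : (A - c • 1).PosSemidef := by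
  have key : A - c • 1 = (hA.eigenvectorUnitary : Matrix (Fin m) (Fin m) ℝ) *
      diagonal (fun i => hA.eigenvalues i - c) *
      star (hA.eigenvectorUnitary : Matrix (Fin m) (Fin m) ℝ) := by
    conv_lhs => rw [spectral_decomp_real hA, ← conj_unitary_smul_one hA c]
    rw [← Matrix.sub_mul, ← Matrix.mul_sub]
    congr 2
    rw [Matrix.smul_one_eq_diagonal, ← Matrix.diagonal_sub]
  rw [key, Matrix.star_eq_conjTranspose]
  exact Matrix.PosSemidef.mul_mul_conjTranspose_same
    (Matrix.posSemidef_diagonal_iff.mpr fun i => by simpa using h i) _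

private lemma smul_one_sub_psd {A : Matrix (Fin m) (Fin m) ℝ} (hA : A.IsHermitian) {c : ℝ}
    (h : ∀ i, hA.eigenvalues i ≤ c) : (c • 1 - A).PosSemidef := by
  have key : c • 1 - A = (hA.eigenvectorUnitary : Matrix (Fin m) (Fin m) ℝ) *
      diagonal (fun i => c - hA.eigenvalues i) *
      star (hA.eigenvectorUnitary : Matrix (Fin m) (Fin m) ℝ) := by
    conv_lhs => rw [spectral_decomp_real hA, ← conj_unitary_smul_one hA c]
    rw [← Matrix.sub_mul, ← Matrix.mul_sub]
    congr 2
    rw [Matrix.smul_one_eq_diagonal, ← Matrix.diagonal_sub]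
  rw [key, Matrix.star_eq_conjTranspose]
  exact Matrix.PosSemidef.mul_mul_conjTranspose_same
    (Matrix.posSemidef_diagonal_iff.mpr fun i => by simpa using h i) _

private lemma trace_eq_sum_eigenvalues {A : Matrix (Fin m) (Fin m) ℝ} (hA : A.IsHermitian) :
    A.trace = ∑ i, hA.eigenvalues i := by
  conv_lhs => rw [spectral_decomp_real hA]
  rw [Matrix.trace_mul_cycle,
    Matrix.mem_unitaryGroup_iff'.mp (Matrix.IsHermitian.eigenvectorUnitary hA).2, one_mul,
    Matrix.trace_diagonal]

private lemma posdef_sub_delta [Nonempty (Fin m)] {Q : Matrix (Fin m) (Fin m) ℝ}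
    (hQ : Q.PosDef) : ∃ δ : ℝ, 0 < δ ∧ (Q - δ • 1).PosSemidef := by
  classical
  obtain ⟨i0, hi0⟩ := Finset.exists_min_image Finset.univ hQ.1.eigenvalues
    ⟨Classical.arbitrary _, Finset.mem_univ _⟩
  exact ⟨hQ.1.eigenvalues i0, hQ.eigenvalues_pos i0,
    sub_smul_one_psd hQ.1 fun i => hi0.2 i (Finset.mem_univ i)⟩

private lemma psd_posdef_of_det_ne_zero {A : Matrix (Fin m) (Fin m) ℝ} (hA : A.PosSemidef)
    (hdet : A.det ≠ 0) : A.PosDef := by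
  refine PosDef.of_dotProduct_mulVec_pos hA.1 fun x hx => ?_
  rcases lt_or_eq_of_le (hA.dotProduct_mulVec_nonneg x) with h | h
  · exact h
  · exfalso
    have h0 : A *ᵥ x = 0 := (hA.dotProduct_mulVec_zero_iff x).mp h.symm
    have : x = 0 := by
      have := congrArg (fun v => A⁻¹ *ᵥ v) h0
      simpa [Matrix.mulVec_mulVec, Matrix.nonsing_inv_mul _ (isUnit_iff_ne_zero.2 hdet)] using this
    exact hx this

noncomputable def matEquiv (m : ℕ) :
    Matrix (Fin m) (Fin m) ℝ ≃ₗ[ℝ] EuclideanSpace ℝ (Fin m × Fin m) :=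
  ((EuclideanSpace.equiv (Fin m × Fin m) ℝ).toLinearEquiv.trans
    (LinearEquiv.curry ℝ ℝ (Fin m) (Fin m))).symm

lemma matEquiv_apply {m : ℕ} (A : Matrix (Fin m) (Fin m) ℝ) (p : Fin m × Fin m) :
    matEquiv m A p = A p.1 p.2 := rfl

lemma matEquiv_symm_apply {m : ℕ} (v : EuclideanSpace ℝ (Fin m × Fin m)) (i j : Fin m) :
    (matEquiv m).symm v i j = v (i, j) := rfl

lemma inner_matEquiv {m : ℕ} {A : Matrix (Fin m) (Fin m) ℝ} (B : Matrix (Fin m) (Fin m) ℝ)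
    (hA : A.IsHermitian) :
    inner ℝ (matEquiv m A) (matEquiv m B) = (A * B).trace := by
  rw [trace_mul_eq_sum hA]
  rw [PiLp.inner_apply]
  refine Finset.sum_congr rfl fun p _ => ?_
  simp [matEquiv_apply, RCLike.inner_apply, starRingEnd_apply, mul_comm]

lemma cont_linfun {m : ℕ} (a : Fin m × Fin m → ℝ) :
    Continuous fun v : EuclideanSpace ℝ (Fin m × Fin m) => ∑ p, a p * v p := by
  refine continuous_finset_sum _ fun p _ => ?_
  exact continuous_const.mul (EuclideanSpace.proj p).continuous

lemma cont_det {m : ℕ} :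
    Continuous fun v : EuclideanSpace ℝ (Fin m × Fin m) => ((matEquiv m).symm v).det := by
  simp only [Matrix.det_apply]
  refine continuous_finset_sum _ fun σ _ => ?_
  refine Continuous.const_smul ?_ _
  refine continuous_finset_prod _ fun i _ => ?_
  exact (EuclideanSpace.proj ((σ : Equiv.Perm (Fin m)) i, i)).continuous

private lemma herm_smul (r : ℝ) {A : Matrix (Fin m) (Fin m) ℝ} (hA : A.IsHermitian) :
    (r • A).IsHermitian := by
  rw [Matrix.IsHermitian, Matrix.conjTranspose_smul, hA.eq, star_trivial]

private lemma span_herm {d : ℕ} {K : Fin d → Matrix (Fin m) (Fin m) ℝ}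
    (hsymm : ∀ j, (K j).IsSymm) {X : Matrix (Fin m) (Fin m) ℝ}
    (hX : X ∈ Submodule.span ℝ (Set.range K)) : X.IsHermitian := by
  induction hX using Submodule.span_induction with
  | mem x hx => obtain ⟨j, rfl⟩ := hx; exact isHermitian_of_isSymm (hsymm j)
  | zero => exact Matrix.isHermitian_zero
  | add x y _ _ hx hy => exact hx.add hy
  | smul r x _ hx => exact herm_smul r hx

private lemma quad_abs_le (A : Matrix (Fin m) (Fin m) ℝ) (x : Fin m → ℝ) :
    |x ⬝ᵥ A *ᵥ x| ≤ (∑ p : Fin m × Fin m, |A p.1 p.2|) * (x ⬝ᵥ x) := by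
  have hxx : ∀ i j : Fin m, |x i * x j| ≤ x ⬝ᵥ x := by
    intro i j
    have h1 : x i ^ 2 ≤ x ⬝ᵥ x := by
      have : x ⬝ᵥ x = ∑ k, x k ^ 2 := by
        simp [dotProduct, sq]
      rw [this]
      exact Finset.single_le_sum (fun k _ => sq_nonneg (x k)) (Finset.mem_univ i)
    have h2 : x j ^ 2 ≤ x ⬝ᵥ x := by
      have : x ⬝ᵥ x = ∑ k, x k ^ 2 := by
        simp [dotProduct, sq]
      rw [this]
      exact Finset.single_le_sum (fun k _ => sq_nonneg (x k)) (Finset.mem_univ j)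
    have := abs_mul (x i) (x j)
    nlinarith [sq_nonneg (|x i| - |x j|), sq_abs (x i), sq_abs (x j), abs_nonneg (x i),
      abs_nonneg (x j)]
  have hrw : x ⬝ᵥ A *ᵥ x = ∑ p : Fin m × Fin m, x p.1 * A p.1 p.2 * x p.2 := by
    rw [Fintype.sum_prod_type]
    simp only [dotProduct, Matrix.mulVec, Finset.mul_sum]
    refine Finset.sum_congr rfl fun i _ => Finset.sum_congr rfl fun j _ => by ring
  rw [hrw]
  calc |∑ p : Fin m × Fin m, x p.1 * A p.1 p.2 * x p.2|
      ≤ ∑ p : Fin m × Fin m, |x p.1 * A p.1 p.2 * x p.2| := Finset.abs_sum_le_sum_abs _ _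
    _ ≤ ∑ p : Fin m × Fin m, |A p.1 p.2| * (x ⬝ᵥ x) := by
        refine Finset.sum_le_sum fun p _ => ?_
        have h := hxx p.1 p.2
        have habs : |x p.1 * A p.1 p.2 * x p.2| = |A p.1 p.2| * |x p.1 * x p.2| := by
          rw [abs_mul, abs_mul, abs_mul]; ring
        rw [habs]
        exact mul_le_mul_of_nonneg_left h (abs_nonneg _)
    _ = (∑ p : Fin m × Fin m, |A p.1 p.2|) * (x ⬝ᵥ x) := by rw [Finset.sum_mul]

private lemma herm_symm_iff (v : EuclideanSpace ℝ (Fin m × Fin m)) :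
    ((matEquiv m).symm v).IsHermitian ↔
      ∀ p : Fin m × Fin m, v (p.2, p.1) = v (p.1, p.2) := by
  constructor
  · intro h p
    have := herm_entry h p.1 p.2
    simpa [matEquiv_symm_apply] using this
  · intro h
    rw [Matrix.IsHermitian]
    ext i j
    rw [conjTranspose_apply, star_trivial]
    exact h (i, j)

private lemma quad_sum_eq (v : EuclideanSpace ℝ (Fin m × Fin m)) (x : Fin m → ℝ) :
    x ⬝ᵥ ((matEquiv m).symm v) *ᵥ x = ∑ p : Fin m × Fin m, (x p.1 * x p.2) * v p := by
  rw [Fintype.sum_prod_type]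
  simp only [dotProduct, Matrix.mulVec, Finset.mul_sum]
  refine Finset.sum_congr rfl fun i _ => Finset.sum_congr rfl fun j _ => ?_
  rw [matEquiv_symm_apply]
  ring

private lemma trace_sum_eq (v : EuclideanSpace ℝ (Fin m × Fin m))
    (N : Matrix (Fin m) (Fin m) ℝ) :
    (((matEquiv m).symm v) * N).trace = ∑ p : Fin m × Fin m, N p.2 p.1 * v p := by
  rw [Fintype.sum_prod_type, Matrix.trace]
  simp only [Matrix.diag_apply, Matrix.mul_apply]
  refine Finset.sum_congr rfl fun i _ => Finset.sum_congr rfl fun j _ => ?_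
  rw [matEquiv_symm_apply]
  ring

private lemma trace_mul_combo {d : ℕ} (K : Fin d → Matrix (Fin m) (Fin m) ℝ) (l : Fin d → ℝ)
    (M : Matrix (Fin m) (Fin m) ℝ) :
    (M * ∑ j, l j • K j).trace = ∑ j, l j * (M * K j).trace := by
  rw [Matrix.mul_sum, Matrix.trace_sum]
  refine Finset.sum_congr rfl fun j _ => ?_
  rw [Matrix.mul_smul, Matrix.trace_smul, smul_eq_mul]

private lemma exists_maximizer [Nonempty (Fin m)] {d : ℕ}
    {K : Fin d → Matrix (Fin m) (Fin m) ℝ}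
    {l : Fin d → ℝ} (hQ : (∑ j, l j • K j).PosDef)
    {S : Matrix (Fin m) (Fin m) ℝ} (hS : S.PosDef) :
    ∃ Sig0 : Matrix (Fin m) (Fin m) ℝ, Sig0.PosDef ∧ (∀ j, (Sig0 * K j).trace = (S * K j).trace) ∧
      ∀ A : Matrix (Fin m) (Fin m) ℝ, A.PosSemidef →
        (∀ j, (A * K j).trace = (S * K j).trace) → A.det ≤ Sig0.det := by
  classical
  set e := matEquiv m with he
  set t : Fin d → ℝ := fun j => (S * K j).trace with ht
  set Q : Matrix (Fin m) (Fin m) ℝ := ∑ j, l j • K j with hQdef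
  set Sfeas : Set (EuclideanSpace ℝ (Fin m × Fin m)) :=
    {v | (e.symm v).PosSemidef ∧ ∀ j, ((e.symm v) * K j).trace = t j} with hSfeas
  -- closedness
  have hclosed : IsClosed Sfeas := by
    have : Sfeas = (⋂ p : Fin m × Fin m, {v : EuclideanSpace ℝ (Fin m × Fin m) |
          v (p.2, p.1) = v (p.1, p.2)}) ∩
        ((⋂ x : Fin m → ℝ, {v : EuclideanSpace ℝ (Fin m × Fin m) |
          0 ≤ ∑ p : Fin m × Fin m, (x p.1 * x p.2) * v p}) ∩
         (⋂ j : Fin d, {v : EuclideanSpace ℝ (Fin m × Fin m) |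
          ∑ p : Fin m × Fin m, K j p.2 p.1 * v p = t j})) := by
      ext v
      simp only [hSfeas, Set.mem_setOf_eq, Set.mem_inter_iff, Set.mem_iInter]
      constructor
      · rintro ⟨hpsd, htr⟩
        refine ⟨(herm_symm_iff v).mp hpsd.1, fun x => ?_, fun j => ?_⟩
        · rw [← quad_sum_eq]
          simpa [star_trivial] using hpsd.dotProduct_mulVec_nonneg x
        · rw [← trace_sum_eq]; exact htr j
      · rintro ⟨hherm, hquad, htr⟩
        refine ⟨PosSemidef.of_dotProduct_mulVec_nonneg ((herm_symm_iff v).mpr hherm) fun x => ?_, fun j => ?_⟩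
        · rw [star_trivial, quad_sum_eq]; exact hquad x
        · rw [trace_sum_eq]; exact htr j
    rw [this]
    refine IsClosed.inter (isClosed_iInter fun p => ?_)
      (IsClosed.inter (isClosed_iInter fun x => ?_) (isClosed_iInter fun j => ?_))
    · exact isClosed_eq (EuclideanSpace.proj (p.2, p.1)).continuous
        (EuclideanSpace.proj (p.1, p.2)).continuous
    · exact isClosed_le continuous_const (cont_linfun _)
    · exact isClosed_eq (cont_linfun _) continuous_const
  -- boundedness
  obtain ⟨δ, hδpos, hδ⟩ := posdef_sub_delta hQ
  set c : ℝ := ∑ j, l j * t j with hc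
  have hbound : ∀ v ∈ Sfeas, ‖v‖ ≤ c / δ := by
    intro v hv
    obtain ⟨hpsd, htr⟩ := hv
    set M := e.symm v with hM
    have htrQ : (M * Q).trace = c := by
      rw [hQdef, trace_mul_combo]
      exact Finset.sum_congr rfl fun j _ => by rw [htr j]
    have htrM : 0 ≤ M.trace := psd_trace_nonneg hpsd
    have h1 : 0 ≤ (M * (Q - δ • 1)).trace := psd_trace_mul_nonneg hpsd hδ
    have h2 : (M * (Q - δ • 1)).trace = (M * Q).trace - δ * M.trace := by
      rw [Matrix.mul_sub, Matrix.trace_sub, Matrix.mul_smul, mul_one, Matrix.trace_smul,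
        smul_eq_mul]
    have htrle : δ * M.trace ≤ c := by rw [h2, htrQ] at h1; linarith
    have hMc : M.trace ≤ c / δ := by
      rw [le_div_iff₀ hδpos]; linarith [htrle]
    -- ‖v‖² = trace (M * M) ≤ (trace M)²
    have heig : ∀ i, hpsd.1.eigenvalues i ≤ M.trace := by
      intro i
      rw [trace_eq_sum_eigenvalues hpsd.1]
      exact Finset.single_le_sum (fun k _ => hpsd.eigenvalues_nonneg k) (Finset.mem_univ i)
    have h3 : 0 ≤ (M * (M.trace • 1 - M)).trace :=
      psd_trace_mul_nonneg hpsd (smul_one_sub_psd hpsd.1 heig)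
    have h4 : (M * M).trace ≤ M.trace * M.trace := by
      have : (M * (M.trace • 1 - M)).trace = M.trace * M.trace - (M * M).trace := by
        rw [Matrix.mul_sub, Matrix.trace_sub, Matrix.mul_smul, mul_one, Matrix.trace_smul,
          smul_eq_mul]
      rw [this] at h3; linarith
    have h5 : ‖v‖ ^ 2 = (M * M).trace := by
      rw [← real_inner_self_eq_norm_sq]
      have hv' : v = e M := by rw [hM, LinearEquiv.apply_symm_apply]
      conv_lhs => rw [hv']
      exact inner_matEquiv M hpsd.1
    have h6 : ‖v‖ ^ 2 ≤ (c / δ) ^ 2 := by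
      rw [h5, sq]
      calc (M * M).trace ≤ M.trace * M.trace := h4
        _ ≤ (c / δ) * (c / δ) := mul_self_le_mul_self htrM hMc
    have hcd : (0 : ℝ) ≤ c / δ := le_trans htrM hMc
    nlinarith [norm_nonneg v]
  have hBdd : Bornology.IsBounded Sfeas := by
    refine (Metric.isBounded_closedBall (x := (0 : EuclideanSpace ℝ (Fin m × Fin m)))
      (r := c / δ)).subset ?_
    intro v hv
    rw [Metric.mem_closedBall, dist_zero_right]
    exact hbound v hv
  have hScompact : IsCompact Sfeas := Metric.isCompact_of_isClosed_isBounded hclosed hBdd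
  have hSne : Sfeas.Nonempty :=
    ⟨e S, by rw [LinearEquiv.symm_apply_apply]; exact hS.posSemidef,
      fun j => by rw [LinearEquiv.symm_apply_apply]⟩
  obtain ⟨v0, hv0, hmax⟩ := hScompact.exists_isMaxOn hSne cont_det.continuousOn
  refine ⟨e.symm v0, ?_, hv0.2, ?_⟩
  · refine psd_posdef_of_det_ne_zero hv0.1 ?_
    have hSmem : e S ∈ Sfeas := by
      constructor
      · rw [LinearEquiv.symm_apply_apply]; exact hS.posSemidef
      · intro j; rw [LinearEquiv.symm_apply_apply]
    have h7 := hmax hSmem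
    simp only [LinearEquiv.symm_apply_apply] at h7
    exact ne_of_gt (lt_of_lt_of_le hS.det_pos h7)
  · intro A hApsd hAtr
    have hmem : e A ∈ Sfeas := by
      constructor
      · rw [LinearEquiv.symm_apply_apply]; exact hApsd
      · intro j; rw [LinearEquiv.symm_apply_apply]; exact hAtr j
    have := hmax hmem
    simpa [he, LinearEquiv.symm_apply_apply] using this

private lemma first_order [Nonempty (Fin m)] {d : ℕ}
    {K : Fin d → Matrix (Fin m) (Fin m) ℝ} {t : Fin d → ℝ}
    {Sig0 : Matrix (Fin m) (Fin m) ℝ} (hpd : Sig0.PosDef)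
    (htr : ∀ j, (Sig0 * K j).trace = t j)
    (hmax : ∀ A : Matrix (Fin m) (Fin m) ℝ, A.PosSemidef →
      (∀ j, (A * K j).trace = t j) → A.det ≤ Sig0.det)
    {A : Matrix (Fin m) (Fin m) ℝ} (hA : A.IsHermitian)
    (hAt : ∀ j, (A * K j).trace = 0) :
    (Sig0⁻¹ * A).trace = 0 := by
  classical
  obtain ⟨δ, hδpos, hδ⟩ := posdef_sub_delta hpd
  set Ca : ℝ := ∑ p : Fin m × Fin m, |A p.1 p.2| with hCa
  have hCa0 : 0 ≤ Ca := Finset.sum_nonneg fun p _ => abs_nonneg _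
  set ε₀ : ℝ := δ / (Ca + 1) with hε₀
  have hε₀pos : 0 < ε₀ := div_pos hδpos (by linarith)
  have hdetS : IsUnit Sig0.det := isUnit_iff_ne_zero.2 (ne_of_gt hpd.det_pos)
  -- perturbations stay feasible
  have key : ∀ r : ℝ, |r| ≤ ε₀ → (Sig0 + r • A).det ≤ Sig0.det := by
    intro r hr
    refine hmax _ (PosSemidef.of_dotProduct_mulVec_nonneg (hpd.1.add (herm_smul r hA)) fun x => ?_) fun j => ?_
    · rw [star_trivial]
      have hq1 : δ * (x ⬝ᵥ x) ≤ x ⬝ᵥ Sig0 *ᵥ x := by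
        have h0 := hδ.dotProduct_mulVec_nonneg x
        rw [star_trivial, Matrix.sub_mulVec, dotProduct_sub, Matrix.smul_mulVec,
          Matrix.one_mulVec, dotProduct_smul, smul_eq_mul] at h0
        linarith
      have hq2 : |x ⬝ᵥ A *ᵥ x| ≤ Ca * (x ⬝ᵥ x) := quad_abs_le A x
      have hxx : 0 ≤ x ⬝ᵥ x := Finset.sum_nonneg fun i _ => mul_self_nonneg (x i)
      have hexp : x ⬝ᵥ (Sig0 + r • A) *ᵥ x = x ⬝ᵥ Sig0 *ᵥ x + r * (x ⬝ᵥ A *ᵥ x) := by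
        rw [Matrix.add_mulVec, dotProduct_add, Matrix.smul_mulVec,
          dotProduct_smul, smul_eq_mul]
      rw [hexp]
      have habs : |r * (x ⬝ᵥ A *ᵥ x)| ≤ ε₀ * (Ca * (x ⬝ᵥ x)) := by
        rw [abs_mul]
        exact mul_le_mul hr hq2 (abs_nonneg _) (le_of_lt hε₀pos)
      have hεCa : ε₀ * Ca ≤ δ := by
        rw [hε₀, div_mul_eq_mul_div, div_le_iff₀ (by linarith : (0:ℝ) < Ca + 1)]
        nlinarith
      have := neg_abs_le (r * (x ⬝ᵥ A *ᵥ x))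
      nlinarith
    · rw [Matrix.add_mul, Matrix.trace_add, Matrix.smul_mul, Matrix.trace_smul, hAt j,
        smul_zero, add_zero]
      exact htr j
  set B := Sig0⁻¹ * A with hB
  have hfact : ∀ r : ℝ, Sig0 + r • A = Sig0 * (1 + r • B) := by
    intro r
    rw [Matrix.mul_add, mul_one, hB, Matrix.mul_smul, ← Matrix.mul_assoc,
      Matrix.mul_nonsing_inv _ hdetS, one_mul]
  have hdet1 : ∀ r : ℝ, |r| ≤ ε₀ → (1 + r • B).det ≤ 1 := by
    intro r hr
    have h1 := key r hr
    rw [hfact r, det_mul] at h1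
    have h2 : Sig0.det * (1 + r • B).det ≤ Sig0.det * 1 := by rw [mul_one]; exact h1
    exact le_of_mul_le_mul_left h2 hpd.det_pos
  obtain ⟨P, hPdef⟩ : ∃ P : Polynomial ℝ,
      ∀ r : ℝ, (1 + r • B).det = 1 + B.trace * r + P.eval r * r ^ 2 :=
    ⟨_, fun r => Matrix.det_one_add_smul r B⟩
  have hpoly : ∀ r : ℝ, |r| ≤ ε₀ → B.trace * r + P.eval r * r ^ 2 ≤ 0 := by
    intro r hr
    have := hdet1 r hr
    rw [hPdef r] at this
    linarith
  -- limits from both sides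
  have hcont : Filter.Tendsto (fun r : ℝ => B.trace + P.eval r * r) (nhds 0)
      (nhds B.trace) := by
    have hc : Continuous fun r : ℝ => B.trace + P.eval r * r :=
      continuous_const.add ((P.continuous).mul continuous_id)
    have := hc.tendsto 0
    simpa using this
  have hle : B.trace ≤ 0 := by
    have hm : Filter.Tendsto (fun r : ℝ => B.trace + P.eval r * r)
        (nhdsWithin (0:ℝ) (Set.Ioi 0)) (nhds B.trace) :=
      hcont.mono_left nhdsWithin_le_nhds
    refine le_of_tendsto hm ?_
    filter_upwards [Ioc_mem_nhdsGT_of_mem (Set.left_mem_Ico.mpr hε₀pos)] with r hr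
    have h1 := hpoly r (by rw [abs_of_pos hr.1]; exact hr.2)
    nlinarith [hr.1]
  have hge : 0 ≤ B.trace := by
    have hm : Filter.Tendsto (fun r : ℝ => B.trace + P.eval r * r)
        (nhdsWithin (0:ℝ) (Set.Iio 0)) (nhds B.trace) :=
      hcont.mono_left nhdsWithin_le_nhds
    refine ge_of_tendsto hm ?_
    filter_upwards [Ico_mem_nhdsLT_of_mem (Set.right_mem_Ioc.mpr (neg_lt_zero.mpr hε₀pos))]
      with r hr
    have h1 := hpoly r (by rw [abs_of_neg hr.2]; linarith [hr.1])
    nlinarith [hr.2]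
  linarith

private lemma inv_mem_span {d : ℕ} {K : Fin d → Matrix (Fin m) (Fin m) ℝ}
    (hsymm : ∀ j, (K j).IsSymm) {Sig0 : Matrix (Fin m) (Fin m) ℝ} (hpd : Sig0.PosDef)
    (hfoc : ∀ A : Matrix (Fin m) (Fin m) ℝ, A.IsHermitian →
      (∀ j, (A * K j).trace = 0) → (Sig0⁻¹ * A).trace = 0) :
    Sig0⁻¹ ∈ Submodule.span ℝ (Set.range K) := by
  classical
  set e := matEquiv m with he
  set W : Submodule ℝ (EuclideanSpace ℝ (Fin m × Fin m)) :=
    Submodule.map (e : Matrix (Fin m) (Fin m) ℝ →ₗ[ℝ] EuclideanSpace ℝ (Fin m × Fin m))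
      (Submodule.span ℝ (Set.range K)) with hW
  have hKW : ∀ j, e (K j) ∈ W := fun j =>
    ⟨K j, Submodule.subset_span ⟨j, rfl⟩, rfl⟩
  have hinvherm : (Sig0⁻¹).IsHermitian := hpd.inv.1
  set v : EuclideanSpace ℝ (Fin m × Fin m) := e Sig0⁻¹ with hv
  set w : EuclideanSpace ℝ (Fin m × Fin m) := ↑(W.orthogonalProjectionOnto v) with hw
  have hwW : w ∈ W := (W.orthogonalProjectionOnto v).2
  set u : EuclideanSpace ℝ (Fin m × Fin m) := v - w with hu
  have huorth : u ∈ Wᗮ := Submodule.sub_starProjection_mem_orthogonal v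
  -- the matrix corresponding to u is hermitian
  have hwherm : (e.symm w).IsHermitian := by
    obtain ⟨X, hX, hXw⟩ := hwW
    have : e.symm w = X := by
      rw [← hXw]; simp only [LinearEquiv.coe_coe, LinearEquiv.symm_apply_apply]
    rw [this]
    exact span_herm hsymm hX
  have huherm : (e.symm u).IsHermitian := by
    have : e.symm u = Sig0⁻¹ - e.symm w := by
      rw [hu, map_sub, hv, e.symm_apply_apply]
    rw [this]
    exact hinvherm.sub hwherm
  -- traces of u against K j vanish
  have hut : ∀ j, ((e.symm u) * K j).trace = 0 := by
    intro j
    have h1 : inner ℝ (e (e.symm u)) (e (K j)) = ((e.symm u) * K j).trace :=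
      inner_matEquiv (K j) huherm
    rw [e.apply_symm_apply] at h1
    rw [← h1]
    rw [real_inner_comm]
    exact huorth (e (K j)) (hKW j)
  -- apply the first-order condition
  have h2 : (Sig0⁻¹ * (e.symm u)).trace = 0 := hfoc _ huherm hut
  have h3 : inner ℝ v u = (0 : ℝ) := by
    have h4 : inner ℝ (e Sig0⁻¹) (e (e.symm u)) = (Sig0⁻¹ * (e.symm u)).trace :=
      inner_matEquiv _ hinvherm
    rw [e.apply_symm_apply] at h4
    rw [hv, h4, h2]
  have h5 : inner ℝ w u = (0 : ℝ) := huorth w hwW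
  have h6 : inner ℝ u u = (0 : ℝ) := by
    rw [hu, inner_sub_left, h3, h5, sub_zero]
  have h7 : u = 0 := inner_self_eq_zero.mp h6
  have h8 : v ∈ W := by
    have : v = w := by rw [← sub_eq_zero]; exact h7
    rw [this]; exact hwW
  obtain ⟨X, hX, hXv⟩ := h8
  have : Sig0⁻¹ = X := by
    have := congrArg e.symm hXv
    simp only [LinearEquiv.coe_coe, LinearEquiv.symm_apply_apply] at this
    rw [this, hv, e.symm_apply_apply]
  rw [this]
  exact hX

/-- The map `K ↦ (trace(K⁻¹·K₁),…,trace(K⁻¹·K_d))` is a bijection from the cone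
of concentration matrices `{K ∈ L : K ≻ 0}` (where `L = span(K₁,…,K_d)`) onto
the cone of sufficient statistics
`C_L = {(trace(S·K₁),…,trace(S·K_d)) : S ≻ 0}`. -/
theorem concentration_to_sufficient_statistics_bijOn
    (m d : ℕ) (K : Fin d → Matrix (Fin m) (Fin m) ℝ)
    (hsymm : ∀ j, (K j).IsSymm)
    (hindep : LinearIndependent ℝ K)
    (hpd : ∃ l : Fin d → ℝ, (∑ j, l j • K j).PosDef) :
    Set.BijOn (fun M : Matrix (Fin m) (Fin m) ℝ => fun j => (M⁻¹ * K j).trace)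
      {M : Matrix (Fin m) (Fin m) ℝ |
        M ∈ Submodule.span ℝ (Set.range K) ∧ M.PosDef}
      {t : Fin d → ℝ |
        ∃ S : Matrix (Fin m) (Fin m) ℝ, S.PosDef ∧ ∀ j, (S * K j).trace = t j} := by
  classical
  by_cases hm : m = 0
  · -- degenerate case: 0×0 matrices
    subst hm
    haveI hsub : Subsingleton (Matrix (Fin 0) (Fin 0) ℝ) :=
      ⟨fun a b => by ext i; exact i.elim0⟩
    haveI : IsEmpty (Fin d) := by
      by_contra h
      rw [not_isEmpty_iff] at h
      obtain ⟨j⟩ := h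
      exact hindep.ne_zero j (Subsingleton.elim _ _)
    have hpd0 : ∀ M : Matrix (Fin 0) (Fin 0) ℝ, M.PosDef := by
      intro M
      refine ⟨Subsingleton.elim _ _, fun x hx => ?_⟩
      exact absurd (Finsupp.ext fun i => i.elim0) hx
    refine ⟨fun M hM => ⟨1, hpd0 1, fun j => (IsEmpty.false j).elim⟩,
      fun M _ N _ _ => Subsingleton.elim M N, fun t ht => ?_⟩
    exact ⟨0, ⟨Submodule.zero_mem _, hpd0 0⟩, funext fun j => (IsEmpty.false j).elim⟩
  haveI : Nonempty (Fin m) := ⟨⟨0, Nat.pos_of_ne_zero hm⟩⟩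
  refine ⟨?_, ?_, ?_⟩
  · -- MapsTo
    rintro M ⟨_, hMpd⟩
    exact ⟨M⁻¹, hMpd.inv, fun j => rfl⟩
  · -- InjOn
    rintro M ⟨hMspan, hMpd⟩ N ⟨hNspan, hNpd⟩ hfeq
    have hMdet : IsUnit M.det := isUnit_iff_ne_zero.2 (ne_of_gt hMpd.det_pos)
    have hNdet : IsUnit N.det := isUnit_iff_ne_zero.2 (ne_of_gt hNpd.det_pos)
    set A := M - N with hA
    have hAspan : A ∈ Submodule.span ℝ (Set.range K) := Submodule.sub_mem _ hMspan hNspan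
    have hAherm : A.IsHermitian := span_herm hsymm hAspan
    have htr : ∀ X ∈ Submodule.span ℝ (Set.range K),
        (M⁻¹ * X).trace = (N⁻¹ * X).trace := by
      intro X hX
      induction hX using Submodule.span_induction with
      | mem x hx =>
        obtain ⟨j, rfl⟩ := hx
        exact congrFun hfeq j
      | zero => simp
      | add x y _ _ hx hy => rw [Matrix.mul_add, Matrix.mul_add, Matrix.trace_add,
          Matrix.trace_add, hx, hy]
      | smul r x _ hx => rw [Matrix.mul_smul, Matrix.mul_smul, Matrix.trace_smul,
          Matrix.trace_smul, hx]
    have hkey : ((M⁻¹ - N⁻¹) * A).trace = 0 := by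
      rw [Matrix.sub_mul, Matrix.trace_sub, htr A hAspan, sub_self]
    have hid : M⁻¹ * A * N⁻¹ = N⁻¹ - M⁻¹ := by
      rw [hA, Matrix.mul_sub, Matrix.sub_mul, Matrix.nonsing_inv_mul _ hMdet, one_mul,
        Matrix.mul_assoc, Matrix.mul_nonsing_inv _ hNdet, mul_one]
    by_contra hne
    have hA0 : A ≠ 0 := fun h => hne (sub_eq_zero.mp h)
    have hpos : 0 < (M⁻¹ * A * N⁻¹ * A).trace :=
      trace_PAQA_pos hMpd.inv hNpd.inv hAherm hA0
    have : (M⁻¹ * A * N⁻¹ * A).trace = -(((M⁻¹ - N⁻¹) * A).trace) := by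
      rw [hid, Matrix.sub_mul, Matrix.trace_sub, Matrix.sub_mul, Matrix.trace_sub]
      ring
    rw [hkey, neg_zero] at this
    exact absurd this (ne_of_gt hpos)
  · -- SurjOn
    rintro t ⟨S, hS, hSt⟩
    obtain ⟨l, hQ⟩ := hpd
    obtain ⟨Sig0, hSig0pd, hSig0tr, hSig0max⟩ := exists_maximizer hQ hS
    have hfoc : ∀ A : Matrix (Fin m) (Fin m) ℝ, A.IsHermitian →
        (∀ j, (A * K j).trace = 0) → (Sig0⁻¹ * A).trace = 0 :=
      fun A hA hAt => first_order hSig0pd hSig0tr hSig0max hA hAt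
    have hmem : Sig0⁻¹ ∈ Submodule.span ℝ (Set.range K) :=
      inv_mem_span hsymm hSig0pd hfoc
    refine ⟨Sig0⁻¹, ⟨hmem, hSig0pd.inv⟩, funext fun j => ?_⟩
    show (Sig0⁻¹⁻¹ * K j).trace = t j
    rw [Matrix.nonsing_inv_nonsing_inv _ (isUnit_iff_ne_zero.2 (ne_of_gt hSig0pd.det_pos)),
      hSig0tr j, hSt j]
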